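/- Let D ⊆ ℝ² be open and let X, Y : D → ℝ be C² functions. Define K = e^{2X}·cosh Y and κ = e^{2X}·sinh Y (so K² − κ² = e^{4X} > 0). Then the pair of equations (K² − κ²)^{1/4}·Δ ln (K² − κ²)^{1/8} = K and (K² − κ²)^{1/4}·Δ ln ((K − κ)/(K + κ)) = −4κ holds on D if and only if the pair of equations Δ X = 2e^{X}·cosh Y and Δ Y = 2e^{X}·sinh Y holds on D. -/
import Mathlib


/-- Partial derivative with respect to the first variable. -/
noncomputable def pd1 (f : ℝ × ℝ → ℝ) (p : ℝ × ℝ) : ℝ := fderiv ℝ f p (1, 0)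

/-- Partial derivative with respect to the second variable. -/
noncomputable def pd2 (f : ℝ × ℝ → ℝ) (p : ℝ × ℝ) : ℝ := fderiv ℝ f p (0, 1)

/-- The Laplace operator Δ = ∂²/∂u² + ∂²/∂v². -/
noncomputable def lap (f : ℝ × ℝ → ℝ) (p : ℝ × ℝ) : ℝ := pd1 (pd1 f) p + pd2 (pd2 f) p

lemma fderiv_cmul (c : ℝ) (f : ℝ × ℝ → ℝ) (p : ℝ × ℝ) (v : ℝ × ℝ) :
    fderiv ℝ (fun q => c * f q) p v = c * fderiv ℝ f p v := by
  rcases eq_or_ne c 0 with rfl | hc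
  · simp
  · by_cases h : DifferentiableAt ℝ f p
    · rw [fderiv_const_mul h]; simp
    · have h2 : ¬ DifferentiableAt ℝ (fun q => c * f q) p := by
        intro h2
        have h3 := h2.const_mul c⁻¹
        apply h
        have : (fun q => c⁻¹ * (c * f q)) = f := by
          funext q; field_simp
        rwa [this] at h3
      rw [fderiv_zero_of_not_differentiableAt h,
        fderiv_zero_of_not_differentiableAt h2]
      simp

lemma pd1_cmul (c : ℝ) (f : ℝ × ℝ → ℝ) :
    pd1 (fun q => c * f q) = fun p => c * pd1 f p := by
  funext p; exact fderiv_cmul c f p _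

lemma pd2_cmul (c : ℝ) (f : ℝ × ℝ → ℝ) :
    pd2 (fun q => c * f q) = fun p => c * pd2 f p := by
  funext p; exact fderiv_cmul c f p _

lemma lap_cmul (c : ℝ) (f : ℝ × ℝ → ℝ) (p : ℝ × ℝ) :
    lap (fun q => c * f q) p = c * lap f p := by
  unfold lap
  rw [pd1_cmul, pd2_cmul, pd1_cmul, pd2_cmul]
  ring

theorem minimal_euclidean_system_iff_canonical_form
    (D : Set (ℝ × ℝ)) (hD : IsOpen D)
    (X Y : ℝ × ℝ → ℝ)
    (hX : ContDiffOn ℝ 2 X D) (hY : ContDiffOn ℝ 2 Y D)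
    (K κ : ℝ × ℝ → ℝ)
    (hK : ∀ p, K p = Real.exp (2 * X p) * Real.cosh (Y p))
    (hκ : ∀ p, κ p = Real.exp (2 * X p) * Real.sinh (Y p)) :
    ((∀ p ∈ D,
        (K p ^ 2 - κ p ^ 2) ^ ((1 : ℝ) / 4) *
            lap (fun q => Real.log ((K q ^ 2 - κ q ^ 2) ^ ((1 : ℝ) / 8))) p = K p) ∧
      (∀ p ∈ D,
        (K p ^ 2 - κ p ^ 2) ^ ((1 : ℝ) / 4) *
            lap (fun q => Real.log ((K q - κ q) / (K q + κ q))) p = -(4 * κ p))) ↔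
    ((∀ p ∈ D, lap X p = 2 * Real.exp (X p) * Real.cosh (Y p)) ∧
      (∀ p ∈ D, lap Y p = 2 * Real.exp (X p) * Real.sinh (Y p))) := by
  have hdiff : ∀ q, K q ^ 2 - κ q ^ 2 = Real.exp (4 * X q) := by
    intro q
    rw [hK, hκ, mul_pow, mul_pow, ← mul_sub, Real.cosh_sq_sub_sinh_sq, mul_one,
      ← Real.exp_nat_mul]
    norm_num; ring_nf
  have e1 : (fun q => Real.log ((K q ^ 2 - κ q ^ 2) ^ ((1 : ℝ) / 8)))
      = fun q => (1/2 : ℝ) * X q := by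
    funext q
    rw [hdiff q, Real.log_rpow (Real.exp_pos _), Real.log_exp]
    ring
  have e2 : (fun q => Real.log ((K q - κ q) / (K q + κ q)))
      = fun q => (-2 : ℝ) * Y q := by
    funext q
    rw [hK, hκ, ← mul_sub, ← mul_add, Real.cosh_sub_sinh, Real.cosh_add_sinh,
      mul_div_mul_left _ _ (Real.exp_ne_zero _), ← Real.exp_sub, Real.log_exp]
    ring
  have e3 : ∀ p : ℝ × ℝ, (K p ^ 2 - κ p ^ 2) ^ ((1 : ℝ) / 4) = Real.exp (X p) := by
    intro p
    rw [hdiff p, ← Real.exp_mul]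
    norm_num
    ring_nf
  constructor
  · rintro ⟨h1, h2⟩
    constructor
    · intro p hp
      have := h1 p hp
      rw [e1, lap_cmul, e3, hK] at this
      have hep := Real.exp_ne_zero (X p)
      have h2e : Real.exp (2 * X p) = Real.exp (X p) * Real.exp (X p) := by
        rw [← Real.exp_add]; ring_nf
      rw [h2e] at this
      have h4 : Real.exp (X p) * (1/2 * lap X p)
          = Real.exp (X p) * (Real.exp (X p) * Real.cosh (Y p)) := by
        rw [this]; ring
      have h5 := mul_left_cancel₀ hep h4
      linarith
    · intro p hp
      have := h2 p hp
      rw [e2, lap_cmul, e3, hκ] at this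
      have hep := Real.exp_ne_zero (X p)
      have h2e : Real.exp (2 * X p) = Real.exp (X p) * Real.exp (X p) := by
        rw [← Real.exp_add]; ring_nf
      rw [h2e] at this
      have h4 : Real.exp (X p) * (-2 * lap Y p)
          = Real.exp (X p) * (-(4 * (Real.exp (X p) * Real.sinh (Y p)))) := by
        rw [this]; ring
      have h5 := mul_left_cancel₀ hep h4
      linarith
  · rintro ⟨h1, h2⟩
    constructor
    · intro p hp
      rw [e1, lap_cmul, e3, hK, h1 p hp]
      have h2e : Real.exp (2 * X p) = Real.exp (X p) * Real.exp (X p) := by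
        rw [← Real.exp_add]; ring_nf
      rw [h2e]; ring
    · intro p hp
      rw [e2, lap_cmul, e3, hκ, h2 p hp]
      have h2e : Real.exp (2 * X p) = Real.exp (X p) * Real.exp (X p) := by
        rw [← Real.exp_add]; ring_nf
      rw [h2e]; ring
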